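/- Let k be a field of characteristic 2 and V a 2n-dimensional k-vector space with non-degenerate symplectic form β given by β(v,w) = vᵗSw where S is the block matrix [[0, I],[I, 0]]. Let g = sp(V) = {x ∈ gl(V) : β(xv,w) + β(v,xw) = 0 for all v,w}. For ξ ∈ g*, choose X ∈ gl(V) with ξ(x) = tr(Xx) for all x ∈ g. Then the element T_ξ = X + SXᵗS and the quadratic form α_ξ(v) = β(v, Xv) are well-defined, i.e., independent of the choice of X. -/

import Mathlib

open Matrix

private lemma trace_mul_single' {k : Type*} [Field k] (n : ℕ)
    (A : Matrix (Fin n ⊕ Fin n) (Fin n ⊕ Fin n) k) (i j : Fin n ⊕ Fin n) :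
    (A * Matrix.single i j (1:k)).trace = A j i := by
  simp [Matrix.trace, Matrix.diag, Matrix.mul_apply, Matrix.single, Finset.sum_ite_eq, ite_and]

private lemma stdBasis_symm {k : Type*} [Field k] (n : ℕ) (i j : Fin n ⊕ Fin n) :
    (Matrix.single i j (1:k))ᵀ = Matrix.single j i (1:k) := by
  ext a b
  simp only [Matrix.transpose_apply, Matrix.single, Matrix.of_apply]
  by_cases h1 : j = a <;> by_cases h2 : i = b <;> simp [h1, h2, and_comm]

private lemma quad_zero {k : Type*} [Field k] [CharP k 2] (n : ℕ)
    (W : Matrix (Fin n ⊕ Fin n) (Fin n ⊕ Fin n) k)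
    (hsym : Wᵀ = W) (hdiag : ∀ i, W i i = 0) (v : Fin n ⊕ Fin n → k) :
    v ⬝ᵥ W.mulVec v = 0 := by
  classical
  have hrw : v ⬝ᵥ W.mulVec v = ∑ p : (Fin n ⊕ Fin n) × (Fin n ⊕ Fin n),
      v p.1 * W p.1 p.2 * v p.2 := by
    rw [← Finset.univ_product_univ, Finset.sum_product]
    simp [dotProduct, Matrix.mulVec, Finset.mul_sum, mul_add, mul_assoc]
  rw [hrw]
  refine Finset.sum_ninvolution (fun p => (p.2, p.1)) ?_ ?_ (fun _ => Finset.mem_univ _)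
    (fun _ => rfl)
  · intro p
    have hW : W p.2 p.1 = W p.1 p.2 := by
      conv_lhs => rw [← hsym]
      rw [Matrix.transpose_apply]
    simp only [hW]
    ring_nf
    rw [show (2:k) = 0 from CharTwo.two_eq_zero, mul_zero]
  · intro p hp
    rcases p with ⟨a, b⟩
    intro heq
    have hba : b = a := congrArg Prod.fst heq
    subst hba
    exact hp (by simp [hdiag])

theorem sp_dual_Txi_alphaxi_well_defined
    {k : Type*} [Field k] [CharP k 2] (n : ℕ)
    (S : Matrix (Fin n ⊕ Fin n) (Fin n ⊕ Fin n) k)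
    (hS : S = Matrix.fromBlocks 0 1 1 0)
    (X X' : Matrix (Fin n ⊕ Fin n) (Fin n ⊕ Fin n) k)
    (h : ∀ x : Matrix (Fin n ⊕ Fin n) (Fin n ⊕ Fin n) k,
      xᵀ * S + S * x = 0 → (X * x).trace = (X' * x).trace) :
    X + S * Xᵀ * S = X' + S * X'ᵀ * S ∧
    ∀ v : Fin n ⊕ Fin n → k,
      v ⬝ᵥ S.mulVec (X.mulVec v) = v ⬝ᵥ S.mulVec (X'.mulVec v) := by
  classical
  set Y := X - X' with hYdef
  have hSt : Sᵀ = S := by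
    rw [hS]; simp [Matrix.fromBlocks_transpose]
  have hSS : S * S = 1 := by
    rw [hS]; simp [Matrix.fromBlocks_multiply]
  have hmem : ∀ M : Matrix (Fin n ⊕ Fin n) (Fin n ⊕ Fin n) k, Mᵀ = M →
      (S * M)ᵀ * S + S * (S * M) = 0 := by
    intro M hM
    rw [Matrix.transpose_mul, hSt, hM, Matrix.mul_assoc M S S, hSS, Matrix.mul_one,
      ← Matrix.mul_assoc S S M, hSS, Matrix.one_mul]
    ext i j
    simp [CharTwo.add_self_eq_zero]
  have hY : ∀ M : Matrix (Fin n ⊕ Fin n) (Fin n ⊕ Fin n) k, Mᵀ = M →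
      (Y * (S * M)).trace = 0 := by
    intro M hM
    have := h (S * M) (hmem M hM)
    rw [hYdef, sub_mul, Matrix.trace_sub, this, sub_self]
  have hdiag : ∀ i, (Y * S) i i = 0 := by
    intro i
    have := hY (Matrix.single i i 1) (stdBasis_symm n i i)
    rwa [← Matrix.mul_assoc, trace_mul_single'] at this
  have hsym : ∀ i j, (Y * S) i j = (Y * S) j i := by
    intro i j
    have hM : (Matrix.single i j (1:k) + Matrix.single j i 1)ᵀ
        = Matrix.single i j (1:k) + Matrix.single j i 1 := by
      rw [Matrix.transpose_add, stdBasis_symm, stdBasis_symm, add_comm]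
    have := hY _ hM
    rw [mul_add, mul_add, Matrix.trace_add, ← Matrix.mul_assoc, ← Matrix.mul_assoc,
      trace_mul_single', trace_mul_single', add_eq_zero_iff_eq_neg, CharTwo.neg_eq] at this
    exact this.symm ▸ rfl
  have hYSsymm : (Y * S)ᵀ = Y * S := by
    ext i j
    rw [Matrix.transpose_apply]
    exact hsym j i
  have hYS : Y * S = S * Yᵀ := by
    conv_lhs => rw [← hYSsymm]
    rw [Matrix.transpose_mul, hSt]
  have hYeq : Y = S * Yᵀ * S := by
    have := congrArg (· * S) hYS
    simpa [Matrix.mul_assoc, hSS] using this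
  constructor
  · have hexp : (X + S * Xᵀ * S) - (X' + S * X'ᵀ * S) = Y + S * Yᵀ * S := by
      rw [hYdef]
      simp only [Matrix.transpose_sub, Matrix.sub_mul, Matrix.mul_sub]
      abel
    rw [← sub_eq_zero, hexp, ← hYeq]
    ext i j
    simp [CharTwo.add_self_eq_zero]
  · intro v
    have hSY : S * Y = Yᵀ * S := by
      conv_lhs => rw [hYeq]
      rw [← Matrix.mul_assoc, ← Matrix.mul_assoc, hSS, Matrix.one_mul]
    have hW : v ⬝ᵥ (S * Y).mulVec v = 0 := by
      apply quad_zero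
      · rw [Matrix.transpose_mul, hSt, ← hSY]
      · intro i
        have key : (S * Y) i i = (Y * S) (Sum.swap i) (Sum.swap i) := by
          simp only [Matrix.mul_apply, hS]
          rw [Fintype.sum_sum_type, Fintype.sum_sum_type]
          rcases i with a | a <;>
            simp [Matrix.fromBlocks_apply₁₁, Matrix.fromBlocks_apply₁₂,
              Matrix.fromBlocks_apply₂₁, Matrix.fromBlocks_apply₂₂, Matrix.one_apply,
              Finset.sum_ite_eq, Finset.sum_ite_eq', eq_comm]
        rw [key, hdiag]
    have hexpand : v ⬝ᵥ (S * Y).mulVec v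
        = v ⬝ᵥ S.mulVec (X.mulVec v) - v ⬝ᵥ S.mulVec (X'.mulVec v) := by
      rw [hYdef, Matrix.mul_sub, Matrix.sub_mulVec, dotProduct_sub,
        ← Matrix.mulVec_mulVec, ← Matrix.mulVec_mulVec]
    rw [hexpand] at hW
    exact sub_eq_zero.mp hW
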